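/- Let g : [0,∞) → [0,∞) be convex and β > g(1). Define 𝒬^{g,β} = {Z ∈ 𝒟 : 𝔼[g(Z)] ≤ β} and 𝒬̃^{g,β} = {Z ∈ 𝒟 : Z > 0 a.s. and 𝔼[g(Z)] < β}. Then 1 ∈ 𝒬̃^{g,β}; for Z ∈ 𝒬^{g,β}, Z̃ ∈ 𝒬̃^{g,β} and λ ∈ (0,1), λZ̃ + (1-λ)Z ∈ 𝒬̃^{g,β}; and for every Z̃ ∈ 𝒬̃^{g,β} and Z ∈ 𝒟 ∩ L^∞ there is λ ∈ (0,1) with λZ̃ + (1-λ)Z ∈ 𝒬^{g,β}. -/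

import Mathlib

open MeasureTheory
open scoped ENNReal

/-- A convex function on `[0, ∞)` agrees on `(0, ∞)` with a measurable function. -/
lemma exists_measurable_ext_of_convexOn {g : ℝ → ℝ} (hgconv : ConvexOn ℝ (Set.Ici 0) g) :
    ∃ h : ℝ → ℝ, Measurable h ∧ ∀ x : ℝ, 0 < x → h x = g x := by
  have hcont : ContinuousOn g (Set.Ioi 0) := by
    have := hgconv.continuousOn_interior
    rwa [interior_Ici] at this
  classical
  refine ⟨(Set.Ioi 0).piecewise g (fun _ => g 1), ?_, ?_⟩
  · apply measurable_of_restrict_of_restrict_compl (measurableSet_Ioi (a := (0:ℝ)))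
    · have h1 : (Set.Ioi (0:ℝ)).restrict ((Set.Ioi 0).piecewise g fun _ => g 1)
          = (Set.Ioi 0).restrict g := by
        funext x
        simp [Set.restrict, Set.piecewise_eq_of_mem _ _ _ x.2]
      rw [show (Set.Ioi (0:ℝ)).domRestrict ((Set.Ioi 0).piecewise g fun _ => g 1) = _ from h1]
      exact (continuousOn_iff_continuous_restrict.mp hcont).measurable
    · have h1 : (Set.Ioi (0:ℝ))ᶜ.restrict ((Set.Ioi 0).piecewise g fun _ => g 1)
          = fun _ => g 1 := by
        funext x
        simp [Set.restrict, Set.piecewise_eq_of_notMem _ _ _ x.2]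
      rw [show (Set.Ioi (0:ℝ))ᶜ.domRestrict ((Set.Ioi 0).piecewise g fun _ => g 1) = _ from h1]
      exact measurable_const
  · intro x hx
    simp [Set.piecewise_eq_of_mem _ _ _ (Set.mem_Ioi.mpr hx)]

/-- Properties of the dual sets of a `g`-entropic risk measure with divergence level `β`. -/
theorem stmt11 {Ω : Type*} [MeasurableSpace Ω] (ℙ : Measure Ω) [IsProbabilityMeasure ℙ]
    (g : ℝ → ℝ) (hgconv : ConvexOn ℝ (Set.Ici 0) g)
    (hgnonneg : ∀ x : ℝ, 0 ≤ x → 0 ≤ g x)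
    (β : ℝ) (hβ : g 1 < β) :
    let 𝒟 : Set (Ω → ℝ) :=
      {Z | Integrable Z ℙ ∧ (∀ᵐ ω ∂ℙ, 0 ≤ Z ω) ∧ ∫ ω, Z ω ∂ℙ = 1}
    let Q : Set (Ω → ℝ) :=
      {Z | Z ∈ 𝒟 ∧ (∫⁻ ω, ENNReal.ofReal (g (Z ω)) ∂ℙ) ≤ ENNReal.ofReal β}
    let Qt : Set (Ω → ℝ) :=
      {Z | Z ∈ 𝒟 ∧ (∀ᵐ ω ∂ℙ, 0 < Z ω) ∧
        (∫⁻ ω, ENNReal.ofReal (g (Z ω)) ∂ℙ) < ENNReal.ofReal β}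
    ((fun _ : Ω => (1 : ℝ)) ∈ Qt) ∧
    (∀ Z ∈ Q, ∀ Zt ∈ Qt, ∀ l : ℝ, l ∈ Set.Ioo (0 : ℝ) 1 →
      (fun ω => l * Zt ω + (1 - l) * Z ω) ∈ Qt) ∧
    (∀ Zt ∈ Qt, ∀ Z ∈ 𝒟, eLpNorm Z ⊤ ℙ < ⊤ →
      ∃ l ∈ Set.Ioo (0 : ℝ) 1, (fun ω => l * Zt ω + (1 - l) * Z ω) ∈ Q) := by
  intro 𝒟 Q Qt
  have hβ0 : 0 < β := lt_of_le_of_lt (hgnonneg 1 zero_le_one) hβ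
  obtain ⟨h, hmeas, hagree⟩ := exists_measurable_ext_of_convexOn hgconv
  -- AEMeasurability of g composed with a.e. positive functions
  have key_meas : ∀ Zt : Ω → ℝ, Integrable Zt ℙ → (∀ᵐ ω ∂ℙ, 0 < Zt ω) →
      AEMeasurable (fun ω => ENNReal.ofReal (g (Zt ω))) ℙ := by
    intro Zt hint hpos
    have h1 : AEMeasurable (fun ω => ENNReal.ofReal (h (Zt ω))) ℙ :=
      (ENNReal.measurable_ofReal.comp hmeas).comp_aemeasurable hint.aemeasurable
    refine h1.congr ?_
    filter_upwards [hpos] with ω hω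
    rw [hagree _ hω]
  constructor
  · -- the constant 1 belongs to Qt
    refine ⟨⟨integrable_const 1, Filter.Eventually.of_forall fun _ => zero_le_one, by simp⟩,
      Filter.Eventually.of_forall fun _ => zero_lt_one, ?_⟩
    rw [lintegral_const, measure_univ, mul_one]
    exact (ENNReal.ofReal_lt_ofReal_iff hβ0).mpr hβ
  constructor
  · -- convex combinations with Qt elements stay in Qt
    rintro Z ⟨⟨hZint, hZnn, hZ1⟩, hZβ⟩ Zt ⟨⟨hZtint, hZtnn, hZt1⟩, hZtpos, hZtβ⟩ l ⟨hl0, hl1⟩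
    have hl0' : (0:ℝ) ≤ l := le_of_lt hl0
    have hl1' : (0:ℝ) ≤ 1 - l := by linarith
    have hcombint : Integrable (fun ω => l * Zt ω + (1 - l) * Z ω) ℙ :=
      (hZtint.const_mul l).add (hZint.const_mul (1 - l))
    refine ⟨⟨hcombint, ?_, ?_⟩, ?_, ?_⟩
    · filter_upwards [hZnn, hZtpos] with ω h1 h2
      have : 0 ≤ l * Zt ω := mul_nonneg hl0' h2.le
      have : 0 ≤ (1 - l) * Z ω := mul_nonneg hl1' h1
      positivity
    · rw [integral_add (hZtint.const_mul l) (hZint.const_mul (1 - l)),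
        integral_const_mul, integral_const_mul, hZt1, hZ1]
      ring
    · filter_upwards [hZnn, hZtpos] with ω h1 h2
      have : 0 < l * Zt ω := mul_pos hl0 h2
      have : 0 ≤ (1 - l) * Z ω := mul_nonneg hl1' h1
      linarith
    · -- divergence bound
      have hAmeas := key_meas Zt hZtint hZtpos
      have hptwise : ∀ᵐ ω ∂ℙ, ENNReal.ofReal (g (l * Zt ω + (1 - l) * Z ω)) ≤
          ENNReal.ofReal l * ENNReal.ofReal (g (Zt ω))
            + ENNReal.ofReal (1 - l) * ENNReal.ofReal (g (Z ω)) := by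
        filter_upwards [hZnn, hZtpos] with ω h1 h2
        have hcvx : g (l * Zt ω + (1 - l) * Z ω) ≤ l * g (Zt ω) + (1 - l) * g (Z ω) := by
          have := hgconv.2 (Set.mem_Ici.mpr h2.le) (Set.mem_Ici.mpr h1) hl0' hl1'
            (by ring : l + (1 - l) = 1)
          simpa [smul_eq_mul] using this
        calc ENNReal.ofReal (g (l * Zt ω + (1 - l) * Z ω))
            ≤ ENNReal.ofReal (l * g (Zt ω) + (1 - l) * g (Z ω)) :=
              ENNReal.ofReal_le_ofReal hcvx
          _ ≤ ENNReal.ofReal (l * g (Zt ω)) + ENNReal.ofReal ((1 - l) * g (Z ω)) :=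
              ENNReal.ofReal_add_le
          _ = ENNReal.ofReal l * ENNReal.ofReal (g (Zt ω))
              + ENNReal.ofReal (1 - l) * ENNReal.ofReal (g (Z ω)) := by
              rw [ENNReal.ofReal_mul hl0', ENNReal.ofReal_mul hl1']
      calc (∫⁻ ω, ENNReal.ofReal (g (l * Zt ω + (1 - l) * Z ω)) ∂ℙ)
          ≤ ∫⁻ ω, ENNReal.ofReal l * ENNReal.ofReal (g (Zt ω))
              + ENNReal.ofReal (1 - l) * ENNReal.ofReal (g (Z ω)) ∂ℙ :=
            lintegral_mono_ae hptwise
        _ = ENNReal.ofReal l * (∫⁻ ω, ENNReal.ofReal (g (Zt ω)) ∂ℙ)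
            + ENNReal.ofReal (1 - l) * (∫⁻ ω, ENNReal.ofReal (g (Z ω)) ∂ℙ) := by
            rw [lintegral_add_left' (hAmeas.const_mul _),
              lintegral_const_mul'' _ hAmeas,
              lintegral_const_mul' _ _ ENNReal.ofReal_ne_top]
        _ ≤ ENNReal.ofReal l * (∫⁻ ω, ENNReal.ofReal (g (Zt ω)) ∂ℙ)
            + ENNReal.ofReal (1 - l) * ENNReal.ofReal β := by
            gcongr
        _ < ENNReal.ofReal l * ENNReal.ofReal β
            + ENNReal.ofReal (1 - l) * ENNReal.ofReal β := by
            apply ENNReal.add_lt_add_right (by finiteness)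
            exact (ENNReal.mul_lt_mul_iff_right (by simpa [ENNReal.ofReal_pos] using hl0)
              ENNReal.ofReal_ne_top).mpr hZtβ
        _ = ENNReal.ofReal β := by
            rw [← ENNReal.ofReal_mul hl0', ← ENNReal.ofReal_mul hl1',
              ← ENNReal.ofReal_add (by positivity) (mul_nonneg hl1' hβ0.le)]
            ring_nf
  · -- mixing a Qt element with a bounded 𝒟 element
    rintro Zt ⟨⟨hZtint, hZtnn, hZt1⟩, hZtpos, hZtβ⟩ Z ⟨hZint, hZnn, hZ1⟩ hZbdd
    set C : ℝ := (eLpNorm Z ⊤ ℙ).toReal with hC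
    have hC0 : 0 ≤ C := ENNReal.toReal_nonneg
    have hZleC : ∀ᵐ ω ∂ℙ, Z ω ≤ C := by
      filter_upwards [ae_le_eLpNormEssSup (f := Z) (μ := ℙ)] with ω hω
      have h1 : Z ω ≤ ‖Z ω‖ := le_abs_self _
      have h2 : ((‖Z ω‖₊ : ℝ≥0∞)).toReal ≤ (eLpNorm Z ⊤ ℙ).toReal := by
        apply ENNReal.toReal_mono (by simpa [eLpNorm_exponent_top] using hZbdd.ne)
        rw [eLpNorm_exponent_top]; exact hω
      simpa [coe_nnnorm, hC] using le_trans h1 h2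
    set M : ℝ := max (g 0) (g C) with hM
    have hM0 : 0 ≤ M := le_trans (hgnonneg 0 le_rfl) (le_max_left _ _)
    have hgM : ∀ᵐ ω ∂ℙ, g (Z ω) ≤ M := by
      filter_upwards [hZnn, hZleC] with ω h1 h2
      apply hgconv.le_on_segment (Set.mem_Ici.mpr le_rfl) (Set.mem_Ici.mpr hC0)
      rw [segment_eq_Icc hC0]
      exact ⟨h1, h2⟩
    -- the divergence of Zt is finite; pass to its real value
    set A : ℝ≥0∞ := ∫⁻ ω, ENNReal.ofReal (g (Zt ω)) ∂ℙ with hA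
    have hAne : A ≠ ⊤ := (lt_trans hZtβ (by finiteness)).ne
    set a : ℝ := A.toReal with ha
    have ha0 : 0 ≤ a := ENNReal.toReal_nonneg
    have haβ : a < β := (ENNReal.lt_ofReal_iff_toReal_lt hAne).mp hZtβ
    set K : ℝ := max M β with hK
    have hKa : a < K := lt_of_lt_of_le haβ (le_max_right _ _)
    set l : ℝ := 1 - (β - a) / (2 * (K - a)) with hl
    have ht0 : 0 < (β - a) / (2 * (K - a)) := by
      apply div_pos (by linarith) (by linarith)
    have ht2 : (β - a) / (2 * (K - a)) ≤ 1 / 2 := by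
      rw [div_le_div_iff₀ (by linarith) (by norm_num)]
      have : β - a ≤ K - a := by
        have : β ≤ K := le_max_right _ _
        linarith
      linarith
    have hl0 : 0 < l := by rw [hl]; linarith
    have hl1 : l < 1 := by rw [hl]; linarith
    have hl0' : (0:ℝ) ≤ l := hl0.le
    have hl1' : (0:ℝ) ≤ 1 - l := by linarith
    clear_value C M a K l
    -- the key real inequality
    have hreal : l * a + (1 - l) * M ≤ β := by
      have h1 : 1 - l = (β - a) / (2 * (K - a)) := by rw [hl]; ring
      have hKane : K - a ≠ 0 := ne_of_gt (by linarith)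
      have h2 : (1 - l) * (K - a) = (β - a) / 2 := by
        rw [h1]; field_simp
      have h3 : (1 - l) * M ≤ (1 - l) * K :=
        mul_le_mul_of_nonneg_left ((le_max_left M β).trans hK.ge) hl1'
      have h4 : l * a + (1 - l) * K = a + (1 - l) * (K - a) := by ring
      nlinarith [haβ, h2, h3, h4]
    refine ⟨l, ⟨hl0, hl1⟩, ⟨(hZtint.const_mul l).add (hZint.const_mul (1 - l)), ?_, ?_⟩, ?_⟩
    · filter_upwards [hZnn, hZtpos] with ω h1 h2
      have : 0 ≤ l * Zt ω := mul_nonneg hl0' h2.le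
      have : 0 ≤ (1 - l) * Z ω := mul_nonneg hl1' h1
      positivity
    · rw [integral_add (hZtint.const_mul l) (hZint.const_mul (1 - l)),
        integral_const_mul, integral_const_mul, hZt1, hZ1]
      ring
    · -- divergence bound
      have hAmeas := key_meas Zt hZtint hZtpos
      have hptwise : ∀ᵐ ω ∂ℙ, ENNReal.ofReal (g (l * Zt ω + (1 - l) * Z ω)) ≤
          ENNReal.ofReal l * ENNReal.ofReal (g (Zt ω)) + ENNReal.ofReal ((1 - l) * M) := by
        filter_upwards [hZnn, hZtpos, hgM] with ω h1 h2 h3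
        have hcvx : g (l * Zt ω + (1 - l) * Z ω) ≤ l * g (Zt ω) + (1 - l) * M := by
          have hc := hgconv.2 (Set.mem_Ici.mpr h2.le) (Set.mem_Ici.mpr h1) hl0' hl1'
            (by ring : l + (1 - l) = 1)
          simp only [smul_eq_mul] at hc
          nlinarith [mul_le_mul_of_nonneg_left h3 hl1']
        calc ENNReal.ofReal (g (l * Zt ω + (1 - l) * Z ω))
            ≤ ENNReal.ofReal (l * g (Zt ω) + (1 - l) * M) := ENNReal.ofReal_le_ofReal hcvx
          _ ≤ ENNReal.ofReal (l * g (Zt ω)) + ENNReal.ofReal ((1 - l) * M) :=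
              ENNReal.ofReal_add_le
          _ = ENNReal.ofReal l * ENNReal.ofReal (g (Zt ω)) + ENNReal.ofReal ((1 - l) * M) := by
              rw [ENNReal.ofReal_mul hl0']
      calc (∫⁻ ω, ENNReal.ofReal (g (l * Zt ω + (1 - l) * Z ω)) ∂ℙ)
          ≤ ∫⁻ ω, ENNReal.ofReal l * ENNReal.ofReal (g (Zt ω))
              + ENNReal.ofReal ((1 - l) * M) ∂ℙ := lintegral_mono_ae hptwise
        _ = ENNReal.ofReal l * A + ENNReal.ofReal ((1 - l) * M) := by
            rw [lintegral_add_left' (hAmeas.const_mul _),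
              lintegral_const_mul'' _ hAmeas, lintegral_const, measure_univ, mul_one, hA]
        _ = ENNReal.ofReal (l * a) + ENNReal.ofReal ((1 - l) * M) := by
            rw [ha, ENNReal.ofReal_mul hl0', ENNReal.ofReal_toReal hAne]
        _ = ENNReal.ofReal (l * a + (1 - l) * M) :=
            (ENNReal.ofReal_add (mul_nonneg hl0' ha0) (mul_nonneg hl1' hM0)).symm
        _ ≤ ENNReal.ofReal β := ENNReal.ofReal_le_ofReal hreal
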